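/- The Apéry set cardinalities of Γₙ satisfy: #S₁ = λ₁ + λ₂ + ⋯ + λₙ + 1, and for every k ∈ {0, 1, …, n−1}, #S_{A_{n−k}} = λ₁ + ⋯ + λ_{n−k−1} + A_{n−k} (where the sum λ₁ + ⋯ + λ_{n−k−1} is empty when k = n−1). -/

import Mathlib

/-- A numerical semigroup: an additive submonoid of ℕ with finite complement. -/
def IsNumericalSemigroup (Γ : Set ℕ) : Prop :=
  0 ∈ Γ ∧ (∀ x ∈ Γ, ∀ y ∈ Γ, x + y ∈ Γ) ∧ Γᶜ.Finite

/-- The Apéry set Ap(Γ,x) = {s ∈ Γ : s - x ∉ Γ}. -/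
def Ap (Γ : Set ℕ) (x : ℕ) : Set ℕ := {s ∈ Γ | ∀ t ∈ Γ, s ≠ t + x}

/-- The inductive numerical semigroups Γ₀ = ℕ, Γᵢ = aᵢ·Γ_{i-1} ∪ (aᵢbᵢ + ℕ). -/
def IndSG (a b : ℕ → ℕ) : ℕ → Set ℕ
  | 0 => Set.univ
  | i + 1 => (fun x => a (i + 1) * x) '' IndSG a b i ∪ {x | a (i + 1) * b (i + 1) ≤ x}

section Aux

/-- Key structural lemma: the Apéry set of `aΓ' ∪ [ab,∞)` at `a*x`. -/
lemma key (Γ' : Set ℕ) (a b x c : ℕ) (ha : 2 ≤ a)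
    (hcond : ∀ s, c ≤ s → s ∈ Γ') (hcb : c ≤ b) :
    Ap ((fun y => a * y) '' Γ' ∪ {y | a * b ≤ y}) (a * x)
      = (fun y => a * y) '' (Ap Γ' x)
        ∪ {s | a * b ≤ s ∧ s < a * b + a * x ∧ ¬ a ∣ s} := by
  ext s
  simp only [Ap, Set.mem_union, Set.mem_image, Set.mem_setOf_eq]
  constructor
  · rintro ⟨hs, h⟩
    have hlt : s < a * b + a * x := by
      by_contra hge
      exact h (s - a * x) (Or.inr (by omega)) (by omega)
    have himage : ∀ t, t ∈ Γ' → s = a * t →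
        (∃ t, ((t ∈ Γ' ∧ ∀ u ∈ Γ', t ≠ u + x)) ∧ a * t = s)
        ∨ (a * b ≤ s ∧ s < a * b + a * x ∧ ¬ a ∣ s) := by
      intro t ht hst
      left
      refine ⟨t, ⟨ht, ?_⟩, hst.symm⟩
      intro u hu htu
      exact h (a * u) (Or.inl ⟨u, hu, rfl⟩)
        (by rw [hst, htu, Nat.mul_add])
    rcases hs with ⟨t, ht, hts⟩ | hs
    · exact himage t ht hts.symm
    · by_cases hdvd : a ∣ s
      · obtain ⟨t, rfl⟩ := hdvd
        have hbt : b ≤ t := Nat.le_of_mul_le_mul_left hs (by omega)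
        exact himage t (hcond t (by omega)) rfl
      · exact Or.inr ⟨hs, hlt, hdvd⟩
  · rintro (⟨t, ⟨ht, hAp⟩, rfl⟩ | ⟨h1, h2, h3⟩)
    · refine ⟨Or.inl ⟨t, ht, rfl⟩, ?_⟩
      intro u hu heq
      rcases hu with ⟨v, hv, rfl⟩ | hu
      · refine hAp v hv (Nat.eq_of_mul_eq_mul_left (show 0 < a by omega) ?_)
        rw [Nat.mul_add]; exact heq
      · have hge : a * (b + x) ≤ a * t := by rw [Nat.mul_add]; omega
        have hbxt : b + x ≤ t := Nat.le_of_mul_le_mul_left hge (by omega)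
        exact hAp (t - x) (hcond _ (by omega)) (by omega)
    · refine ⟨Or.inr h1, ?_⟩
      intro u hu heq
      rcases hu with ⟨v, hv, rfl⟩ | hu
      · exact h3 ⟨v + x, by rw [heq, Nat.mul_add]⟩
      · omega

lemma key_card (Γ' : Set ℕ) (a b x c : ℕ) (ha : 2 ≤ a)
    (hcond : ∀ s, c ≤ s → s ∈ Γ') (hcb : c ≤ b) :
    (Ap ((fun y => a * y) '' Γ' ∪ {y | a * b ≤ y}) (a * x)).ncard
      = (Ap Γ' x).ncard + (a * x - x) := by
  have hfin : (Ap Γ' x).Finite := by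
    apply Set.Finite.subset (Set.finite_Iio (c + x))
    rintro t ⟨ht, h⟩
    simp only [Set.mem_Iio]
    by_contra hge
    exact h (t - x) (hcond _ (by omega)) (by omega)
  have hS2 : {s | a * b ≤ s ∧ s < a * b + a * x ∧ ¬ a ∣ s}
      = ↑((Finset.Ico (a*b) (a*b + a*x)).filter (fun s => ¬ a ∣ s)) := by
    ext s
    simp only [Set.mem_setOf_eq, Finset.coe_filter, Finset.mem_Ico]
    tauto
  have hinj : Function.Injective (fun y => a * y) :=
    mul_right_injective₀ (by omega : a ≠ 0)
  have hdisj : Disjoint ((fun y => a * y) '' (Ap Γ' x))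
      {s | a * b ≤ s ∧ s < a * b + a * x ∧ ¬ a ∣ s} := by
    rw [Set.disjoint_left]
    rintro s ⟨t, ht, rfl⟩ hs2
    exact hs2.2.2 ⟨t, rfl⟩
  have hfin2 : {s | a * b ≤ s ∧ s < a * b + a * x ∧ ¬ a ∣ s}.Finite := by
    rw [hS2]; exact Finset.finite_toSet _
  rw [key Γ' a b x c ha hcond hcb,
    Set.ncard_union_eq hdisj (hfin.image _) hfin2,
    Set.ncard_image_of_injective _ hinj]
  · congr 1
    rw [hS2, Set.ncard_coe_finset]
    have hmul : (Finset.Ico (a*b) (a*b + a*x)).filter (fun s => a ∣ s)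
        = (Finset.Ico b (b + x)).image (fun t => a * t) := by
      ext s
      simp only [Finset.mem_filter, Finset.mem_Ico, Finset.mem_image]
      constructor
      · rintro ⟨⟨h1, h2⟩, t, rfl⟩
        refine ⟨t, ⟨Nat.le_of_mul_le_mul_left h1 (by omega), ?_⟩, rfl⟩
        by_contra hge
        have : a * (b + x) ≤ a * t := Nat.mul_le_mul_left a (by omega)
        rw [Nat.mul_add] at this
        omega
      · rintro ⟨t, ⟨h1, h2⟩, rfl⟩
        have hle : a * b ≤ a * t := Nat.mul_le_mul_left a h1
        have hlt : a * (t + 1) ≤ a * (b + x) := Nat.mul_le_mul_left a (by omega)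
        rw [Nat.mul_add, Nat.mul_add, Nat.mul_one] at hlt
        exact ⟨⟨hle, by omega⟩, t, rfl⟩
    have hcards := Finset.card_filter_add_card_filter_not
      (s := Finset.Ico (a*b) (a*b + a*x)) (p := fun s => a ∣ s)
    rw [hmul, Finset.card_image_of_injective _ hinj] at hcards
    rw [Nat.card_Ico, Nat.card_Ico] at hcards
    omega

/-- Apéry set at 1 for one inductive step. -/
lemma ap_one (Γ' : Set ℕ) (a b c : ℕ) (ha : 2 ≤ a)
    (hcond : ∀ s, c ≤ s → s ∈ Γ') (hcb : c ≤ b) :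
    Ap ((fun y => a * y) '' Γ' ∪ {y | a * b ≤ y}) 1
      = (fun y => a * y) '' {t ∈ Γ' | t ≤ b} := by
  ext s
  simp only [Ap, Set.mem_union, Set.mem_image, Set.mem_setOf_eq]
  constructor
  · rintro ⟨hs, h⟩
    have hle : s ≤ a * b := by
      by_contra hgt
      exact h (s - 1) (Or.inr (by omega)) (by omega)
    rcases hs with ⟨t, ht, rfl⟩ | hs
    · exact ⟨t, ⟨ht, Nat.le_of_mul_le_mul_left hle (by omega)⟩, rfl⟩
    · exact ⟨b, ⟨hcond b hcb, le_rfl⟩, by omega⟩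
  · rintro ⟨t, ⟨ht, htb⟩, rfl⟩
    refine ⟨Or.inl ⟨t, ht, rfl⟩, ?_⟩
    intro u hu heq
    rcases hu with ⟨v, hv, rfl⟩ | hu
    · have h1 : v < t := by
        by_contra hvt
        have : a * t ≤ a * v := Nat.mul_le_mul_left a (by omega)
        omega
      have h2 : a * (v + 1) ≤ a * t := Nat.mul_le_mul_left a (by omega)
      rw [Nat.mul_add, Nat.mul_one] at h2
      omega
    · have : a * t ≤ a * b := Nat.mul_le_mul_left a htb
      omega

lemma below_cond (Γ' : Set ℕ) (a b c : ℕ) (ha : 2 ≤ a)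
    (hcond : ∀ s, c ≤ s → s ∈ Γ') (hcb : c ≤ b) :
    {s ∈ ((fun y => a * y) '' Γ' ∪ {y | a * b ≤ y}) | s ≤ a * b}
      = (fun y => a * y) '' {t ∈ Γ' | t ≤ b} := by
  ext s
  simp only [Set.mem_union, Set.mem_image, Set.mem_setOf_eq, Set.sep_setOf]
  constructor
  · rintro ⟨⟨t, ht, rfl⟩ | hs, hle⟩
    · exact ⟨t, ⟨ht, Nat.le_of_mul_le_mul_left hle (by omega)⟩, rfl⟩
    · exact ⟨b, ⟨hcond b hcb, le_rfl⟩, by omega⟩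
  · rintro ⟨t, ⟨ht, htb⟩, rfl⟩
    exact ⟨Or.inl ⟨t, ht, rfl⟩, Nat.mul_le_mul_left a htb⟩

lemma cval_cond (a b : ℕ → ℕ) (m : ℕ) :
    ∀ s, (if m = 0 then 0 else a m * b m) ≤ s → s ∈ IndSG a b m := by
  cases m with
  | zero => intro s _; trivial
  | succ m' => intro s hs; exact Set.mem_union_right _ (by simpa using hs)

lemma part1 (n : ℕ) (a b lam : ℕ → ℕ)
    (ha : ∀ i, 1 ≤ i → i ≤ n → 2 ≤ a i)
    (hb : ∀ i, 1 ≤ i → i + 1 ≤ n → a i * b i ≤ b (i + 1))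
    (hlam1 : lam 1 = b 1)
    (hlam : ∀ i, 2 ≤ i → i ≤ n → lam i = b i - a (i - 1) * b (i - 1)) :
    ∀ m, m ≤ n →
      Ap (IndSG a b m) 1 = {s ∈ IndSG a b m | s ≤ (if m = 0 then 0 else a m * b m)}
      ∧ (Ap (IndSG a b m) 1).ncard = (∑ i ∈ Finset.Icc 1 m, lam i) + 1 := by
  intro m
  induction m with
  | zero =>
    intro _
    have hset : Ap (IndSG a b 0) 1 = {s ∈ IndSG a b 0 | s ≤ (if 0 = 0 then 0 else a 0 * b 0)} := by
      ext s
      simp only [Ap, IndSG, Set.mem_univ, true_and, Set.mem_setOf_eq, reduceIte, Set.sep_univ]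
      constructor
      · intro h
        by_contra hs
        exact h (s - 1) trivial (by omega)
      · intro h u _ heq
        omega
    refine ⟨hset, ?_⟩
    rw [hset]
    have : {s ∈ IndSG a b 0 | s ≤ (if 0 = 0 then 0 else a 0 * b 0)} = {0} := by
      ext s
      simp only [IndSG, Set.mem_univ, true_and, Set.mem_setOf_eq, reduceIte,
        Set.mem_singleton_iff, Set.sep_univ]
      omega
    rw [this, Set.ncard_singleton, Finset.Icc_eq_empty (by omega), Finset.sum_empty]
  | succ m ih =>
    intro hm1
    obtain ⟨ihset, ihcard⟩ := ih (by omega)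
    set c := if m = 0 then 0 else a m * b m with hc
    have hcond : ∀ s, c ≤ s → s ∈ IndSG a b m := cval_cond a b m
    have hcb : c ≤ b (m + 1) := by
      cases m with
      | zero => simp [hc]
      | succ m' => simpa [hc] using hb (m' + 1) (by omega) (by omega)
    have haS : 2 ≤ a (m + 1) := ha (m + 1) (by omega) hm1
    have hunfold : IndSG a b (m + 1)
        = (fun y => a (m + 1) * y) '' IndSG a b m ∪ {y | a (m + 1) * b (m + 1) ≤ y} := rfl
    have himg : Ap (IndSG a b (m + 1)) 1
        = (fun y => a (m + 1) * y) '' {t ∈ IndSG a b m | t ≤ b (m + 1)} := by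
      rw [hunfold]; exact ap_one _ _ _ c haS hcond hcb
    constructor
    · rw [himg, if_neg (Nat.succ_ne_zero m)]
      conv_lhs => rw [← below_cond (IndSG a b m) (a (m+1)) (b (m+1)) c haS hcond hcb]
      rw [hunfold]
    · have hinj : Function.Injective (fun y => a (m + 1) * y) :=
        mul_right_injective₀ (by omega : a (m + 1) ≠ 0)
      rw [himg, Set.ncard_image_of_injective _ hinj]
      have hsplit : {t ∈ IndSG a b m | t ≤ b (m + 1)}
          = Ap (IndSG a b m) 1 ∪ Set.Ioc c (b (m + 1)) := by
        rw [ihset]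
        ext t
        simp only [Set.mem_union, Set.mem_setOf_eq, Set.mem_Ioc]
        constructor
        · rintro ⟨htG, htle⟩
          by_cases hct : t ≤ c
          · exact Or.inl ⟨htG, hct⟩
          · exact Or.inr ⟨by omega, htle⟩
        · rintro (⟨h1, h2⟩ | ⟨h1, h2⟩)
          · exact ⟨h1, h2.trans hcb⟩
          · exact ⟨hcond t (le_of_lt h1), h2⟩
      have hdisj : Disjoint (Ap (IndSG a b m) 1) (Set.Ioc c (b (m + 1))) := by
        rw [ihset, Set.disjoint_left]
        rintro t ⟨_, h1⟩ ⟨h2, _⟩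
        omega
      have hfin1 : (Ap (IndSG a b m) 1).Finite := by
        rw [ihset]
        exact Set.Finite.subset (Set.finite_Iic c) (fun t ht => ht.2)
      rw [hsplit, Set.ncard_union_eq hdisj hfin1 (Set.finite_Ioc c (b (m + 1))), ihcard]
      have hIoc : (Set.Ioc c (b (m + 1))).ncard = b (m + 1) - c := by
        rw [← Finset.coe_Ioc, Set.ncard_coe_finset, Nat.card_Ioc]
      rw [hIoc, Finset.sum_Icc_succ_top (by omega : 1 ≤ m + 1)]
      have hlamval : lam (m + 1) = b (m + 1) - c := by
        cases m with
        | zero => simpa [hc] using hlam1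
        | succ m' =>
          have := hlam (m' + 2) (by omega) (by omega)
          simpa [hc] using this
      omega

lemma part2 (n : ℕ) (a b lam : ℕ → ℕ)
    (ha : ∀ i, 1 ≤ i → i ≤ n → 2 ≤ a i)
    (hb : ∀ i, 1 ≤ i → i + 1 ≤ n → a i * b i ≤ b (i + 1))
    (hlam1 : lam 1 = b 1)
    (hlam : ∀ i, 2 ≤ i → i ≤ n → lam i = b i - a (i - 1) * b (i - 1)) :
    ∀ d m, 1 ≤ m → m + d ≤ n →
      (Ap (IndSG a b (m + d)) (∏ j ∈ Finset.Icc m (m + d), a j)).ncard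
        = (∑ i ∈ Finset.Icc 1 (m - 1), lam i) + ∏ j ∈ Finset.Icc m (m + d), a j := by
  intro d
  induction d with
  | zero =>
    intro m hm1 hmn
    obtain ⟨m', rfl⟩ : ∃ m', m = m' + 1 := ⟨m - 1, by omega⟩
    simp only [Nat.add_zero, Finset.Icc_self, Finset.prod_singleton, Nat.add_sub_cancel]
    have hcond : ∀ s, (if m' = 0 then 0 else a m' * b m') ≤ s → s ∈ IndSG a b m' :=
      cval_cond a b m'
    have hcb : (if m' = 0 then 0 else a m' * b m') ≤ b (m' + 1) := by
      cases m' with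
      | zero => simp
      | succ m'' => simpa using hb (m'' + 1) (by omega) (by omega)
    have haS : 2 ≤ a (m' + 1) := ha (m' + 1) (by omega) (by omega)
    have hk := key_card (IndSG a b m') (a (m' + 1)) (b (m' + 1)) 1
      (if m' = 0 then 0 else a m' * b m') haS hcond hcb
    rw [Nat.mul_one] at hk
    have hunfold : IndSG a b (m' + 1)
        = (fun y => a (m' + 1) * y) '' IndSG a b m' ∪ {y | a (m' + 1) * b (m' + 1) ≤ y} := rfl
    rw [hunfold, hk,
      (part1 n a b lam ha hb hlam1 hlam m' (by omega)).2]
    omega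
  | succ d ihd =>
    intro m hm1 hmn
    have hx : ∏ j ∈ Finset.Icc m (m + (d + 1)), a j
        = a (m + d + 1) * ∏ j ∈ Finset.Icc m (m + d), a j := by
      rw [show m + (d + 1) = (m + d) + 1 from rfl,
        Finset.prod_Icc_succ_top (by omega : m ≤ m + d + 1), mul_comm]
    have hcond : ∀ s, a (m + d) * b (m + d) ≤ s → s ∈ IndSG a b (m + d) := by
      intro s hs
      have := cval_cond a b (m + d) s
      rw [if_neg (by omega : ¬ m + d = 0)] at this
      exact this hs
    have hcb : a (m + d) * b (m + d) ≤ b (m + d + 1) := hb (m + d) (by omega) (by omega)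
    have haS : 2 ≤ a (m + d + 1) := ha (m + d + 1) (by omega) (by omega)
    have hk := key_card (IndSG a b (m + d)) (a (m + d + 1)) (b (m + d + 1))
      (∏ j ∈ Finset.Icc m (m + d), a j) (a (m + d) * b (m + d)) haS hcond hcb
    have hunfold : IndSG a b (m + (d + 1))
        = (fun y => a (m + d + 1) * y) '' IndSG a b (m + d)
          ∪ {y | a (m + d + 1) * b (m + d + 1) ≤ y} := rfl
    rw [hx, hunfold, hk, ihd m hm1 (by omega)]
    have hle : (∏ j ∈ Finset.Icc m (m + d), a j)
        ≤ a (m + d + 1) * ∏ j ∈ Finset.Icc m (m + d), a j :=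
      Nat.le_mul_of_pos_left _ (by omega)
    omega

end Aux

theorem stmt7 (n : ℕ) (hn : 1 ≤ n) (a b : ℕ → ℕ)
    (ha : ∀ i, 1 ≤ i → i ≤ n → 2 ≤ a i)
    (hb1 : 1 ≤ b 1)
    (hb : ∀ i, 1 ≤ i → i + 1 ≤ n → a i * b i ≤ b (i + 1))
    (A lam : ℕ → ℕ)
    (hA : ∀ i, A i = ∏ j ∈ Finset.Icc i n, a j)
    (hlam1 : lam 1 = b 1)
    (hlam : ∀ i, 2 ≤ i → i ≤ n → lam i = b i - a (i - 1) * b (i - 1)) :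
    (Ap (IndSG a b n) 1).ncard = (∑ i ∈ Finset.Icc 1 n, lam i) + 1
    ∧ ∀ k, k ≤ n - 1 →
        (Ap (IndSG a b n) (A (n - k))).ncard
          = (∑ i ∈ Finset.Icc 1 (n - k - 1), lam i) + A (n - k) := by
  constructor
  · exact (part1 n a b lam ha hb hlam1 hlam n le_rfl).2
  · intro k hk
    have h2 : (n - k) + k = n := by omega
    have hmain := part2 n a b lam ha hb hlam1 hlam k (n - k) (by omega) (by omega)
    rw [h2] at hmain
    rw [hA (n - k)]
    exact hmain
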